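/- arXiv:2311.13923 — 6 statements merged into one kernel-verified Lean document; each statement's English description precedes it below -/
import Mathlib

section
/- Suppose n_A ≥ 1 and (λ10 + λ01 − λ11)·p_0 ≥ λ10 − λ11 + λ11·max_{1≤i≤n_A} p_i. Then for every i ∈ {1,…,n_A}, λ01·p_0 + λ11·(1 − p_i − p_0) ≥ λ10·(1 − p_0); that is, the BRL cost of declaring record j a non-link is no larger than the BRL cost of declaring record j linked to any record i of file A, so the BRL estimator declares record j a non-link. -/
/-- Sufficient condition for a non-match, Proposition 1.
For a fixed record `j` of file `B`, `p i` is the posterior probability that record `j`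
matches record `i` of file `A`, and `p0` is the posterior probability that it matches
no record of `A`.  If `(λ10 + λ01 − λ11)·p0 ≥ λ10 − λ11 + λ11·max_i p i`, then for every
`i`, the BRL cost of a non-link, `λ10·(1 − p0)`, is no larger than the BRL cost
`λ01·p0 + λ11·(1 − p i − p0)` of linking record `j` to record `i`. -/
theorem brl_nonmatch_sufficient_condition
    {nA : ℕ} (hnA : 1 ≤ nA)
    (lam10 lam01 lam11 : ℝ)
    (h10 : 0 < lam10) (h01 : 0 < lam01) (h11 : 0 < lam11)
    (p0 : ℝ) (p : Fin nA → ℝ)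
    (hp0 : 0 ≤ p0) (hp : ∀ i, 0 ≤ p i)
    (hsum : p0 + ∑ i, p i = 1)
    (hcond : (lam10 + lam01 - lam11) * p0 ≥
      lam10 - lam11 +
        lam11 * Finset.univ.sup'
          (Finset.univ_nonempty_iff.mpr (Fin.pos_iff_nonempty.mp hnA)) p) :
    ∀ i : Fin nA,
      lam01 * p0 + lam11 * (1 - p i - p0) ≥ lam10 * (1 - p0) := by
  intro i
  have hle : p i ≤ Finset.univ.sup'
      (Finset.univ_nonempty_iff.mpr (Fin.pos_iff_nonempty.mp hnA)) p :=
    Finset.le_sup' p (Finset.mem_univ i)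
  nlinarith [mul_le_mul_of_nonneg_left hle h11.le]
end

section
/- Consider assignments Ẑ = (Ẑ_1, …, Ẑ_{n_B}) where each Ẑ_j ∈ {1,…,n_A} ∪ {n_A + j} and no two records of B are assigned to the same record of A (if Ẑ_j = Ẑ_{j'} ≤ n_A then j = j'), with total cost Σ_{j=1}^{n_B} cost_j(Ẑ_j), where cost_j(n_A + j) = λ10·(1 − p_{0,j}) and cost_j(i) = λ01·p_{0,j} + λ11·(1 − p_{i,j} − p_{0,j}) for i ≤ n_A. If n_A ≥ 1 and for some fixed record j₀ it holds that (λ10 + λ01 − λ11)·p_{0,j₀} ≥ λ10 − λ11 + λ11·max_{1≤i≤n_A} p_{i,j₀}, then there exists an assignment Ẑ minimizing the total cost that satisfies Ẑ_{j₀} = n_A + j₀, i.e., record j₀ is declared a non-link in some cost-minimizing bipartite assignment. -/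
/-- BRL cost for record `j` of file `B`: `brlCost λ10 λ01 λ11 p0 pm none` is the cost of
declaring record `j` a non-link, and `brlCost λ10 λ01 λ11 p0 pm (some i)` is the cost of
declaring it linked to record `i` of file `A`.  Here `p0` is the posterior probability of
no link and `pm i` the posterior probability of a link to record `i`. -/
noncomputable def brlCost {nA : ℕ} (lam10 lam01 lam11 p0 : ℝ)
    (pm : Fin nA → ℝ) : Option (Fin nA) → ℝ
  | none => lam10 * (1 - p0)
  | some i => lam01 * p0 + lam11 * (1 - pm i - p0)

/-- Consider bipartite assignments `Z : Fin nB → Option (Fin nA)` (record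
`j` of `B` is assigned to record `Z j` of `A`, or to no record when `Z j = none`), where
no two records of `B` are assigned to the same record of `A`, with total cost
`∑ j, brlCost λ10 λ01 λ11 (p0 j) (pm · j) (Z j)`.  If `nA ≥ 1` and for some record `j₀`
we have `(λ10 + λ01 − λ11)·p0 j₀ ≥ λ10 − λ11 + λ11·max_i pm i j₀`, then there exists a
total-cost-minimizing assignment that declares `j₀` a non-link. -/
theorem brl_nonmatch_in_some_optimal_assignment
    {nA nB : ℕ} (hnA : 1 ≤ nA)
    (lam10 lam01 lam11 : ℝ)
    (h10 : 0 < lam10) (h01 : 0 < lam01) (h11 : 0 < lam11)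
    (p0 : Fin nB → ℝ) (pm : Fin nA → Fin nB → ℝ)
    (hp0 : ∀ j, 0 ≤ p0 j) (hpm : ∀ i j, 0 ≤ pm i j)
    (hsum : ∀ j, p0 j + ∑ i, pm i j = 1)
    (j0 : Fin nB)
    (hcond : (lam10 + lam01 - lam11) * p0 j0 ≥
      lam10 - lam11 +
        lam11 * Finset.univ.sup'
          (Finset.univ_nonempty_iff.mpr (Fin.pos_iff_nonempty.mp hnA))
          (fun i => pm i j0)) :
    ∃ Z : Fin nB → Option (Fin nA),
      (∀ j j' : Fin nB, ∀ i : Fin nA, Z j = some i → Z j' = some i → j = j') ∧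
      (∀ Z' : Fin nB → Option (Fin nA),
        (∀ j j' : Fin nB, ∀ i : Fin nA, Z' j = some i → Z' j' = some i → j = j') →
        ∑ j, brlCost lam10 lam01 lam11 (p0 j) (fun i => pm i j) (Z j) ≤
          ∑ j, brlCost lam10 lam01 lam11 (p0 j) (fun i => pm i j) (Z' j)) ∧
      Z j0 = none := by
  classical
  set val : (Fin nB → Option (Fin nA)) → Prop :=
    fun Z => ∀ j j' : Fin nB, ∀ i : Fin nA, Z j = some i → Z j' = some i → j = j' with hval
  set cost : (Fin nB → Option (Fin nA)) → ℝ :=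
    fun Z => ∑ j, brlCost lam10 lam01 lam11 (p0 j) (fun i => pm i j) (Z j) with hcost
  have hS : (Finset.univ.filter val).Nonempty :=
    ⟨fun _ => none, by simp [val]⟩
  obtain ⟨Z, hZmem, hZmin⟩ := Finset.exists_min_image _ cost hS
  have hZval : val Z := (Finset.mem_filter.mp hZmem).2
  have hZmin' : ∀ Z', val Z' → cost Z ≤ cost Z' := fun Z' hZ' =>
    hZmin Z' (Finset.mem_filter.mpr ⟨Finset.mem_univ _, hZ'⟩)
  have hkey : ∀ i : Fin nA,
      brlCost lam10 lam01 lam11 (p0 j0) (fun i => pm i j0) none ≤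
      brlCost lam10 lam01 lam11 (p0 j0) (fun i => pm i j0) (some i) := by
    intro i
    have hle : pm i j0 ≤ Finset.univ.sup'
        (Finset.univ_nonempty_iff.mpr (Fin.pos_iff_nonempty.mp hnA))
        (fun i => pm i j0) :=
      Finset.le_sup' (fun i => pm i j0) (Finset.mem_univ i)
    simp only [brlCost]
    nlinarith [hle, hcond, h11.le]
  cases hz0 : Z j0 with
  | none => exact ⟨Z, hZval, fun Z' h => hZmin' Z' h, hz0⟩
  | some i =>
    set Z2 : Fin nB → Option (Fin nA) := Function.update Z j0 none with hZ2
    have hZ2val : val Z2 := by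
      intro j j' k hj hj'
      have hjne : j ≠ j0 := by
        rintro rfl; simp [Z2, Function.update_self] at hj
      have hj'ne : j' ≠ j0 := by
        rintro rfl; simp [Z2, Function.update_self] at hj'
      exact hZval j j' k (by simpa [Z2, Function.update_of_ne hjne] using hj)
        (by simpa [Z2, Function.update_of_ne hj'ne] using hj')
    have hcostle : cost Z2 ≤ cost Z := by
      rw [hcost]
      apply Finset.sum_le_sum
      intro j _
      by_cases hj : j = j0
      · rw [hj, show Z2 j0 = none from Function.update_self _ _ _, hz0]
        exact hkey i
      · rw [show Z2 j = Z j from Function.update_of_ne hj _ _]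
    refine ⟨Z2, hZ2val, fun Z' h => le_trans hcostle (hZmin' Z' h), ?_⟩
    simp [Z2]
end

section
/- Let Ĉ = [ĉ_{i,j}] be an n_A × n_B matrix with entries in {0,1} satisfying Σ_{i,j} ĉ_{i,j} = k. Then (1/L)·Σ_{s=1}^{L} F_β(Ĉ, C^{(s)}) = Σ_{i,j} ĉ_{i,j}·Δ^{(k)}_{i,j}; that is, over matrices with exactly k links, the Monte Carlo estimate of the expected F-score is a linear function of the entries of Ĉ with coefficients Δ^{(k)}_{i,j}. -/
/-- Let `C⁽¹⁾, …, C⁽ᴸ⁾` be 0/1 posterior samples of the linkage structure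
and let `Ĉ` be a 0/1 matrix with exactly `k` links, `∑_{i,j} ĉ_{i,j} = k`.  Then the
Monte Carlo estimate `(1/L)·∑_s F_β(Ĉ, C⁽ˢ⁾)` of the expected F-score equals the linear
function `∑_{i,j} ĉ_{i,j}·Δ⁽ᵏ⁾_{i,j}` of the entries of `Ĉ`, where
`Δ⁽ᵏ⁾_{i,j} = (1/L)·∑_s (1+β²)·c⁽ˢ⁾_{i,j} / (β²·∑_{i',j'} c⁽ˢ⁾_{i',j'} + k)`. -/
theorem monte_carlo_expected_fscore_linear
    {nA nB L : ℕ} (hL : 0 < L) (k : ℕ) (hk : 1 ≤ k)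
    (β : ℝ) (hβ : 0 < β)
    (Chat : Fin nA → Fin nB → ℝ)
    (hChat : ∀ i j, Chat i j = 0 ∨ Chat i j = 1)
    (C : Fin L → Fin nA → Fin nB → ℝ)
    (hC : ∀ s i j, C s i j = 0 ∨ C s i j = 1)
    (hsum : ∑ i, ∑ j, Chat i j = (k : ℝ)) :
    (1 / (L : ℝ)) *
        ∑ s, ((1 + β ^ 2) * (∑ i, ∑ j, Chat i j * C s i j)) /
          (β ^ 2 * (∑ i, ∑ j, C s i j) + ∑ i, ∑ j, Chat i j) =
      ∑ i, ∑ j, Chat i j *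
        ((1 / (L : ℝ)) *
          ∑ s, (1 + β ^ 2) * C s i j /
            (β ^ 2 * (∑ i', ∑ j', C s i' j') + (k : ℝ))) := by
  have key : ∀ s : Fin L, ((1 + β ^ 2) * (∑ i, ∑ j, Chat i j * C s i j)) /
      (β ^ 2 * (∑ i, ∑ j, C s i j) + (k : ℝ)) =
      ∑ i, ∑ j, Chat i j * ((1 + β ^ 2) * C s i j /
        (β ^ 2 * (∑ i', ∑ j', C s i' j') + (k : ℝ))) := by
    intro s
    rw [Finset.mul_sum, Finset.sum_div]
    refine Finset.sum_congr rfl fun i _ => ?_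
    rw [Finset.mul_sum, Finset.sum_div]
    refine Finset.sum_congr rfl fun j _ => ?_
    ring
  have swap : ∀ (g : Fin L → Fin nA → Fin nB → ℝ),
      ∑ s, ∑ i, ∑ j, g s i j = ∑ i, ∑ j, ∑ s, g s i j := by
    intro g
    rw [Finset.sum_comm]
    exact Finset.sum_congr rfl fun i _ => Finset.sum_comm
  rw [hsum]
  simp only [key]
  simp only [Finset.mul_sum]
  rw [swap]
  refine Finset.sum_congr rfl fun i _ => ?_
  refine Finset.sum_congr rfl fun j _ => ?_
  refine Finset.sum_congr rfl fun s _ => ?_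
  ring
end

section
/- Suppose M > k·max_{i,j} Δ(i,j). Then every feasible assignment f maximizing the total score Σ_{j=1}^{n_B} s(f(j), j) uses every dummy row (each of the n_B − k dummy rows equals f(j) for some j); equivalently, every maximizer assigns exactly n_B − k records of B to dummy rows and exactly k records of B to rows i ≤ n_A. -/
/-- Entry of the augmented score matrix: `Δ(i,j)` for the genuine rows `i < nA` and the
large value `M` for the `nB − k` dummy rows `nA ≤ i < nA + nB − k`. -/
noncomputable def augScore {nA nB k : ℕ} (Δ : Fin nA → Fin nB → ℝ) (M : ℝ)
    (i : Fin (nA + nB - k)) (j : Fin nB) : ℝ :=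
  if h : (i : ℕ) < nA then Δ ⟨(i : ℕ), h⟩ j else M

/-- If `M > k·max_{i,j} Δ(i,j)` (here stated as `M > k·Δ(i,j)` for all
`i, j`, equivalent since `1 ≤ k ≤ min(nA, nB)` makes the index set nonempty), then every
injective assignment `f : Fin nB → Fin (nA + nB − k)` maximizing the total augmented
score uses every dummy row; equivalently, it assigns exactly `nB − k` records of `B` to
dummy rows and exactly `k` records of `B` to genuine rows `i < nA`. -/
theorem lsap_maximizer_uses_all_dummy_rows
    {nA nB k : ℕ} (hk1 : 1 ≤ k) (hkA : k ≤ nA) (hkB : k ≤ nB)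
    (Δ : Fin nA → Fin nB → ℝ) (hΔ : ∀ i j, 0 ≤ Δ i j)
    (M : ℝ) (hM : ∀ i j, (k : ℝ) * Δ i j < M) :
    ∀ f : Fin nB → Fin (nA + nB - k), Function.Injective f →
      (∀ g : Fin nB → Fin (nA + nB - k), Function.Injective g →
        ∑ j, augScore Δ M (g j) j ≤ ∑ j, augScore Δ M (f j) j) →
      (∀ i : Fin (nA + nB - k), nA ≤ (i : ℕ) → ∃ j, f j = i) ∧
      (Finset.univ.filter (fun j : Fin nB => nA ≤ ((f j : ℕ)))).card = nB - k ∧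
      (Finset.univ.filter (fun j : Fin nB => ((f j : ℕ)) < nA)).card = k := by
  intro f hf hmax
  classical
  have hMΔ : ∀ i j, Δ i j < M := by
    intro i j
    have h1 : Δ i j ≤ (k : ℝ) * Δ i j :=
      le_mul_of_one_le_left (hΔ i j) (by exact_mod_cast hk1)
    exact lt_of_le_of_lt h1 (hM i j)
  have hnAn : nA ≤ nA + nB - k := by omega
  -- improvement step: an unused dummy row plus a genuine assignment contradicts maximality
  have improve : ∀ i0 : Fin (nA + nB - k), nA ≤ (i0 : ℕ) → (∀ j, f j ≠ i0) →
      ∀ j0 : Fin nB, ((f j0 : ℕ)) < nA → False := by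
    intro i0 hi0 hnot j0 hj0
    set g := Function.update f j0 i0 with hg
    have hginj : Function.Injective g := by
      intro a b hab
      rcases eq_or_ne a j0 with ha | ha <;> rcases eq_or_ne b j0 with hb | hb
      · rw [ha, hb]
      · subst ha
        rw [hg, Function.update_self, Function.update_of_ne hb] at hab
        exact absurd hab.symm (hnot b)
      · subst hb
        rw [hg, Function.update_self, Function.update_of_ne ha] at hab
        exact absurd hab (hnot a)
      · rw [hg, Function.update_of_ne ha, Function.update_of_ne hb] at hab
        exact hf hab
    have hle := hmax g hginj
    have e1 : ∑ j ∈ Finset.univ.erase j0, augScore Δ M (g j) j + augScore Δ M (g j0) j0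
        = ∑ j, augScore Δ M (g j) j := Finset.sum_erase_add _ _ (Finset.mem_univ j0)
    have e2 : ∑ j ∈ Finset.univ.erase j0, augScore Δ M (f j) j + augScore Δ M (f j0) j0
        = ∑ j, augScore Δ M (f j) j := Finset.sum_erase_add _ _ (Finset.mem_univ j0)
    have e3 : ∑ j ∈ Finset.univ.erase j0, augScore Δ M (g j) j
        = ∑ j ∈ Finset.univ.erase j0, augScore Δ M (f j) j := by
      refine Finset.sum_congr rfl (fun j hj => ?_)
      rw [hg, Function.update_of_ne (Finset.ne_of_mem_erase hj)]
    have hg0 : augScore Δ M (g j0) j0 = M := by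
      rw [hg, Function.update_self]
      unfold augScore
      rw [dif_neg (by omega)]
    have hf0 : augScore Δ M (f j0) j0 = Δ ⟨(f j0 : ℕ), hj0⟩ j0 := by
      unfold augScore
      rw [dif_pos hj0]
    rw [← e1, ← e2, e3, hg0, hf0] at hle
    linarith [hMΔ ⟨(f j0 : ℕ), hj0⟩ j0]
  -- cardinality of the sets of genuine and dummy rows
  have hGrows : (Finset.univ.filter (fun i : Fin (nA + nB - k) => (i : ℕ) < nA)).card = nA := by
    have heq : Finset.univ.filter (fun i : Fin (nA + nB - k) => (i : ℕ) < nA)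
        = Finset.map (Fin.castLEEmb hnAn) Finset.univ := by
      ext i
      simp only [Finset.mem_filter, Finset.mem_map, Finset.mem_univ, true_and, Fin.castLEEmb]
      constructor
      · intro hi; exact ⟨⟨i, hi⟩, rfl⟩
      · rintro ⟨a, rfl⟩; simp [Fin.castLE]
    rw [heq]; simp
  have hDrows : (Finset.univ.filter (fun i : Fin (nA + nB - k) => nA ≤ (i : ℕ))).card
      = nB - k := by
    have h := Finset.card_filter_add_card_filter_not (s := Finset.univ)
      (p := fun i : Fin (nA + nB - k) => nA ≤ (i : ℕ))
    simp only [not_le, Finset.card_univ, Fintype.card_fin] at h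
    rw [hGrows] at h
    omega
  set Dset := Finset.univ.filter (fun j : Fin nB => nA ≤ ((f j : ℕ))) with hDdef
  set Gset := Finset.univ.filter (fun j : Fin nB => ((f j : ℕ)) < nA) with hGdef
  have hDG : Dset.card + Gset.card = nB := by
    have h := Finset.card_filter_add_card_filter_not (s := Finset.univ)
      (p := fun j : Fin nB => nA ≤ ((f j : ℕ)))
    simp only [not_le, Finset.card_univ, Fintype.card_fin] at h
    exact h
  have himg : Finset.image f Dset ⊆
      Finset.univ.filter (fun i : Fin (nA + nB - k) => nA ≤ (i : ℕ)) := by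
    intro i hi
    simp only [Finset.mem_image, hDdef, Finset.mem_filter, Finset.mem_univ, true_and] at hi ⊢
    obtain ⟨j, hj, rfl⟩ := hi
    exact hj
  have hDle : Dset.card ≤ nB - k := by
    calc Dset.card = (Finset.image f Dset).card :=
          (Finset.card_image_of_injective _ hf).symm
      _ ≤ _ := Finset.card_le_card himg
      _ = nB - k := hDrows
  have hDeq : Dset.card = nB - k := by
    by_contra hne
    have hlt : Dset.card < nB - k := lt_of_le_of_ne hDle hne
    have hcardlt : (Finset.image f Dset).card <
        (Finset.univ.filter (fun i : Fin (nA + nB - k) => nA ≤ (i : ℕ))).card := by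
      rw [Finset.card_image_of_injective _ hf, hDrows]; exact hlt
    have hsd : 0 < (SDiff.sdiff (Finset.univ.filter (fun i : Fin (nA + nB - k) => nA ≤ (i : ℕ))) (Finset.image f Dset)).card := by
      rw [Finset.card_sdiff_of_subset himg]; omega
    obtain ⟨i0, hi0sd⟩ := Finset.card_pos.mp hsd
    obtain ⟨hi0mem, hi0not⟩ := Finset.mem_sdiff.mp hi0sd
    simp only [Finset.mem_filter, Finset.mem_univ, true_and] at hi0mem
    have hnot : ∀ j, f j ≠ i0 := by
      intro j hj
      apply hi0not
      rw [← hj]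
      apply Finset.mem_image_of_mem
      simp only [hDdef, Finset.mem_filter, Finset.mem_univ, true_and]
      rw [hj]; exact hi0mem
    have hGpos : 0 < Gset.card := by omega
    obtain ⟨j0, hj0⟩ := Finset.card_pos.mp hGpos
    simp only [hGdef, Finset.mem_filter, Finset.mem_univ, true_and] at hj0
    exact improve i0 hi0mem hnot j0 hj0
  have hGeq : Gset.card = k := by omega
  refine ⟨?_, hDeq, hGeq⟩
  -- surjectivity onto dummy rows
  have heqset : Finset.image f Dset
      = Finset.univ.filter (fun i : Fin (nA + nB - k) => nA ≤ (i : ℕ)) := by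
    apply Finset.eq_of_subset_of_card_le himg
    rw [Finset.card_image_of_injective _ hf, hDeq, hDrows]
  intro i hi
  have : i ∈ Finset.image f Dset := by
    rw [heqset]
    simp only [Finset.mem_filter, Finset.mem_univ, true_and]
    exact hi
  obtain ⟨j, _, hj⟩ := Finset.mem_image.mp this
  exact ⟨j, hj⟩
end

section
/- Suppose M ≥ k·max_{i,j} Δ(i,j). Then there exists a feasible assignment f maximizing the total score Σ_{j=1}^{n_B} s(f(j), j) that uses every dummy row, i.e., a maximizer assigning exactly k records of B to rows i ≤ n_A. -/
/-- Cardinality of the set of indices of `Fin N` below a bound `nA ≤ N`. -/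
lemma card_filter_val_lt (N nA : ℕ) (h : nA ≤ N) :
    ((Finset.univ : Finset (Fin N)).filter (fun i : Fin N => (i : ℕ) < nA)).card = nA := by
  classical
  rw [show ((Finset.univ : Finset (Fin N)).filter (fun i : Fin N => (i : ℕ) < nA)) =
      Finset.map (Fin.castLEOrderEmb h).toEmbedding Finset.univ from ?_]
  · simp
  · ext i
    simp only [Finset.mem_filter, Finset.mem_univ, true_and, Finset.mem_map,
      Fin.castLEOrderEmb_apply]
    constructor
    · intro hi
      exact ⟨⟨(i : ℕ), hi⟩, by ext; rfl⟩
    · rintro ⟨a, rfl⟩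
      exact a.isLt

/-- Cardinality of the set of "dummy rows". -/
lemma card_filter_dummy (N nA : ℕ) (h : nA ≤ N) :
    ((Finset.univ : Finset (Fin N)).filter (fun i : Fin N => nA ≤ (i : ℕ))).card = N - nA := by
  classical
  have h1 := Finset.card_filter_add_card_filter_not
    (s := (Finset.univ : Finset (Fin N))) (p := fun i : Fin N => (i : ℕ) < nA)
  have h2 : ((Finset.univ : Finset (Fin N)).filter (fun i : Fin N => ¬ (i : ℕ) < nA)) =
      ((Finset.univ : Finset (Fin N)).filter (fun i : Fin N => nA ≤ (i : ℕ))) := by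
    apply Finset.filter_congr; intro i _; simp [not_lt]
  rw [card_filter_val_lt N nA h, h2] at h1
  simp at h1
  omega

/-- If `M ≥ k·max_{i,j} Δ(i,j)` (here stated as `M ≥ k·Δ(i,j)` for all
`i, j`, equivalent since `1 ≤ k ≤ min(nA, nB)` makes the index set nonempty), then there
exists an injective assignment `f : Fin nB → Fin (nA + nB − k)` maximizing the total
augmented score that uses every dummy row, i.e., a maximizer assigning exactly `k`
records of `B` to the genuine rows `i < nA`. -/
theorem lsap_exists_maximizer_using_all_dummy_rows
    {nA nB k : ℕ} (hk1 : 1 ≤ k) (hkA : k ≤ nA) (hkB : k ≤ nB)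
    (Δ : Fin nA → Fin nB → ℝ) (hΔ : ∀ i j, 0 ≤ Δ i j)
    (M : ℝ) (hM : ∀ i j, (k : ℝ) * Δ i j ≤ M) :
    ∃ f : Fin nB → Fin (nA + nB - k), Function.Injective f ∧
      (∀ g : Fin nB → Fin (nA + nB - k), Function.Injective g →
        ∑ j, augScore Δ M (g j) j ≤ ∑ j, augScore Δ M (f j) j) ∧
      (∀ i : Fin (nA + nB - k), nA ≤ (i : ℕ) → ∃ j, f j = i) ∧
      (Finset.univ.filter (fun j : Fin nB => ((f j : ℕ)) < nA)).card = k := by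
  classical
  have hN : nA ≤ nA + nB - k := by omega
  have hΔM : ∀ i j, Δ i j ≤ M := by
    intro i j
    calc Δ i j = 1 * Δ i j := (one_mul _).symm
    _ ≤ (k : ℝ) * Δ i j := by
        apply mul_le_mul_of_nonneg_right _ (hΔ i j)
        exact_mod_cast hk1
    _ ≤ M := hM i j
  -- the "good" predicate
  let P : (Fin nB → Fin (nA + nB - k)) → Prop := fun f =>
    Function.Injective f ∧ ∀ i : Fin (nA + nB - k), nA ≤ (i : ℕ) → ∃ j, f j = i
  -- key: any injective g is dominated by some good f
  have key : ∀ m : ℕ, ∀ g : Fin nB → Fin (nA + nB - k), Function.Injective g →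
      (Finset.univ.filter
        (fun i : Fin (nA + nB - k) => nA ≤ (i : ℕ) ∧ ∀ j, g j ≠ i)).card = m →
      ∃ f, P f ∧ ∑ j, augScore Δ M (g j) j ≤ ∑ j, augScore Δ M (f j) j := by
    intro m
    induction m with
    | zero =>
      intro g hg hcard
      refine ⟨g, ⟨hg, ?_⟩, le_refl _⟩
      intro i hi
      by_contra h
      push_neg at h
      have : i ∈ Finset.univ.filter
          (fun i : Fin (nA + nB - k) => nA ≤ (i : ℕ) ∧ ∀ j, g j ≠ i) := by
        simp [hi, h]
      rw [Finset.card_eq_zero.mp hcard] at this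
      exact absurd this (Finset.notMem_empty i)
    | succ m ih =>
      intro g hg hcard
      obtain ⟨i, hi⟩ := Finset.card_pos.mp (by omega :
        0 < (Finset.univ.filter
          (fun i : Fin (nA + nB - k) => nA ≤ (i : ℕ) ∧ ∀ j, g j ≠ i)).card)
      simp only [Finset.mem_filter, Finset.mem_univ, true_and] at hi
      obtain ⟨hiA, hinr⟩ := hi
      -- find a column assigned to a genuine row
      have hj : ∃ j, (g j : ℕ) < nA := by
        by_contra h
        push_neg at h
        have hmaps : ∀ j : Fin nB, g j ∈ (Finset.univ : Finset (Fin (nA + nB - k))).filter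
            (fun i' : Fin (nA + nB - k) => nA ≤ (i' : ℕ) ∧ i' ≠ i) := by
          intro j
          simp only [Finset.mem_filter, Finset.mem_univ, true_and]
          exact ⟨h j, fun he => hinr j he⟩
        have hle := Finset.card_le_card_of_injOn (s := (Finset.univ : Finset (Fin nB)))
          (t := (Finset.univ : Finset (Fin (nA + nB - k))).filter
            (fun i' : Fin (nA + nB - k) => nA ≤ (i' : ℕ) ∧ i' ≠ i))
          g (fun j _ => hmaps j) (fun a _ b _ hab => hg hab)
        have hsub : ((Finset.univ : Finset (Fin (nA + nB - k))).filter
            (fun i' : Fin (nA + nB - k) => nA ≤ (i' : ℕ) ∧ i' ≠ i)) ⊆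
            (((Finset.univ : Finset (Fin (nA + nB - k))).filter
              (fun i' : Fin (nA + nB - k) => nA ≤ (i' : ℕ))).erase i) := by
          intro x hx
          simp only [Finset.mem_filter, Finset.mem_univ, true_and] at hx
          simp [Finset.mem_erase, hx.2, hx.1]
        have hcd := card_filter_dummy (nA + nB - k) nA hN
        have hcard2 := Finset.card_le_card hsub
        have hcerase : (((Finset.univ : Finset (Fin (nA + nB - k))).filter
              (fun i' : Fin (nA + nB - k) => nA ≤ (i' : ℕ))).erase i).card =
            ((Finset.univ : Finset (Fin (nA + nB - k))).filter
              (fun i' : Fin (nA + nB - k) => nA ≤ (i' : ℕ))).card - 1 := by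
          apply Finset.card_erase_of_mem
          simp [hiA]
        simp only [Finset.card_univ, Fintype.card_fin] at hle
        omega
      obtain ⟨j, hj⟩ := hj
      set g' := Function.update g j i with hg'def
      have hg'j : g' j = i := Function.update_self j i g
      have hg'ne : ∀ j', j' ≠ j → g' j' = g j' := fun j' h => Function.update_of_ne h i g
      have hg' : Function.Injective g' := by
        intro a b hab
        by_cases ha : a = j <;> by_cases hb : b = j
        · rw [ha, hb]
        · exfalso
          rw [ha, hg'j, hg'ne b hb] at hab
          exact hinr b hab.symm
        · exfalso
          rw [hb, hg'j, hg'ne a ha] at hab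
          exact hinr a hab
        · rw [hg'ne a ha, hg'ne b hb] at hab
          exact hg hab
      have hs : ∑ x, augScore Δ M (g x) x ≤ ∑ x, augScore Δ M (g' x) x := by
        apply Finset.sum_le_sum
        intro x _
        by_cases hx : x = j
        · subst hx
          rw [hg'j]
          have h1 : augScore Δ M (g x) x = Δ ⟨(g x : ℕ), hj⟩ x := by
            simp [augScore, hj]
          have h2 : augScore Δ M i x = M := by
            simp [augScore, not_lt.mpr hiA]
          rw [h1, h2]
          exact hΔM _ _
        · rw [hg'ne x hx]
      have hcard' : (Finset.univ.filter
          (fun i' : Fin (nA + nB - k) => nA ≤ (i' : ℕ) ∧ ∀ j', g' j' ≠ i')).card = m := by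
        have hset : (Finset.univ.filter
            (fun i' : Fin (nA + nB - k) => nA ≤ (i' : ℕ) ∧ ∀ j', g' j' ≠ i')) =
            (Finset.univ.filter
              (fun i' : Fin (nA + nB - k) => nA ≤ (i' : ℕ) ∧ ∀ j', g j' ≠ i')).erase i := by
          ext x
          simp only [Finset.mem_erase, Finset.mem_filter, Finset.mem_univ, true_and]
          constructor
          · intro ⟨hx1, hx2⟩
            have hxne : x ≠ i := by
              intro he
              exact hx2 j (by rw [hg'j, he])
            refine ⟨hxne, hx1, fun j' he => ?_⟩
            by_cases hj' : j' = j
            · subst hj'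
              have : (g j' : ℕ) < nA := hj
              rw [he] at this
              omega
            · exact hx2 j' (by rw [hg'ne j' hj']; exact he)
          · intro ⟨hxne, hx1, hx2⟩
            refine ⟨hx1, fun j' => ?_⟩
            by_cases hj' : j' = j
            · subst hj'; rw [hg'j]; exact fun he => hxne he.symm
            · rw [hg'ne j' hj']; exact hx2 j'
        rw [hset, Finset.card_erase_of_mem (by simp [hiA, hinr]), hcard]
        omega
      obtain ⟨f, hf, hle⟩ := ih g' hg' hcard'
      exact ⟨f, hf, le_trans hs hle⟩
  -- an explicit good assignment, for nonemptiness
  have hf0 : ∃ f0, P f0 := by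
    refine ⟨fun j => if h : (j : ℕ) < k then ⟨(j : ℕ), by omega⟩
      else ⟨nA + (j : ℕ) - k, by have := j.isLt; omega⟩, ?_, ?_⟩
    · intro a b hab
      have ha := a.isLt
      have hb := b.isLt
      by_cases h1 : (a : ℕ) < k <;> by_cases h2 : (b : ℕ) < k <;>
        simp only [h1, h2, dif_pos, dif_neg, not_false_iff, Fin.mk.injEq] at hab <;>
        first
          | (apply Fin.ext; omega)
          | (exfalso; omega)
    · intro i hi
      have hiN := i.isLt
      refine ⟨⟨(i : ℕ) - nA + k, by omega⟩, ?_⟩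
      have hnlt : ¬ (((i : ℕ) - nA + k) < k) := by omega
      simp only [hnlt, dif_neg, not_false_iff]
      apply Fin.ext
      simp
      omega
  obtain ⟨f0, hf0⟩ := hf0
  -- maximize over good assignments
  have hTne : (Finset.univ.filter (fun f : Fin nB → Fin (nA + nB - k) => P f)).Nonempty :=
    ⟨f0, by simpa using hf0⟩
  obtain ⟨f, hfT, hfmax⟩ := Finset.exists_max_image _
    (fun f : Fin nB → Fin (nA + nB - k) => ∑ j, augScore Δ M (f j) j) hTne
  simp only [Finset.mem_filter, Finset.mem_univ, true_and] at hfT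
  obtain ⟨hfinj, hfsurj⟩ := hfT
  refine ⟨f, hfinj, ?_, hfsurj, ?_⟩
  · intro g hg
    obtain ⟨f', hf', hle⟩ := key _ g hg rfl
    exact le_trans hle (hfmax f' (by simpa using hf'))
  · -- counting
    have hinj' : Set.InjOn f ((Finset.univ : Finset (Fin nB)).filter
        (fun j : Fin nB => nA ≤ (f j : ℕ))) := fun a _ b _ hab => hfinj hab
    have himg : Finset.image f ((Finset.univ : Finset (Fin nB)).filter
          (fun j : Fin nB => nA ≤ (f j : ℕ))) =
        (Finset.univ : Finset (Fin (nA + nB - k))).filter (fun i : Fin (nA + nB - k) => nA ≤ (i : ℕ)) := by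
      ext x
      simp only [Finset.mem_image, Finset.mem_filter, Finset.mem_univ, true_and]
      constructor
      · rintro ⟨a, ha, rfl⟩; exact ha
      · intro hx
        obtain ⟨j, rfl⟩ := hfsurj x hx
        exact ⟨j, hx, rfl⟩
    have hcB : ((Finset.univ : Finset (Fin nB)).filter
        (fun j : Fin nB => nA ≤ (f j : ℕ))).card = nA + nB - k - nA := by
      rw [← card_filter_dummy (nA + nB - k) nA hN, ← himg,
        Finset.card_image_of_injOn hinj']
    have hsplit := Finset.card_filter_add_card_filter_not
      (s := (Finset.univ : Finset (Fin nB))) (p := fun j : Fin nB => (f j : ℕ) < nA)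
    have heq : ((Finset.univ : Finset (Fin nB)).filter (fun j : Fin nB => ¬ (f j : ℕ) < nA)) =
        ((Finset.univ : Finset (Fin nB)).filter (fun j : Fin nB => nA ≤ (f j : ℕ))) := by
      apply Finset.filter_congr; intro j _; simp [not_lt]
    rw [heq, hcB] at hsplit
    simp only [Finset.card_univ, Fintype.card_fin] at hsplit
    omega
end

section
/- Suppose M > k·max_{i,j} Δ(i,j). Then the maximal total score over feasible assignments equals (n_B − k)·M + max{ Σ_{i,j} ĉ_{i,j}·Δ(i,j) : Ĉ a bipartite linkage structure with Σ_{i,j} ĉ_{i,j} = k }. Moreover, for any maximizing feasible assignment f, the matrix Ĉ defined by ĉ_{i,j} = 1 if and only if f(j) = i with i ≤ n_A is a bipartite linkage structure with exactly k links that maximizes Σ_{i,j} ĉ_{i,j}·Δ(i,j) over all bipartite linkage structures with exactly k links; that is, the augmented linear sum assignment problem solves the k-constrained inner maximization. -/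
/-- A bipartite linkage structure: a 0/1 matrix whose row sums and column sums are all
at most one. -/
def IsBipartiteLinkage {nA nB : ℕ} (Chat : Fin nA → Fin nB → ℝ) : Prop :=
  (∀ i j, Chat i j = 0 ∨ Chat i j = 1) ∧
  (∀ i, ∑ j, Chat i j ≤ 1) ∧ (∀ j, ∑ i, Chat i j ≤ 1)

private lemma card_filter_ge_aux {n a : ℕ} (h : a ≤ n) :
    (Finset.univ.filter (fun i : Fin n => a ≤ (i : ℕ))).card = n - a := by
  rw [Finset.card_filter]
  rw [Fin.sum_univ_eq_sum_range (fun x => if a ≤ x then 1 else 0) n]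
  rw [← Finset.card_filter]
  have heq : (Finset.range n).filter (fun x => a ≤ x) = Finset.range n \ Finset.range a := by
    ext x
    simp only [Finset.mem_filter, Finset.mem_sdiff, Finset.mem_range]
    omega
  rw [heq, Finset.card_sdiff_of_subset (Finset.range_subset_range.mpr h), Finset.card_range, Finset.card_range]

private lemma inner_sum_aux {nA : ℕ} (c : ℕ) (A : Fin nA → ℝ) :
    (∑ i : Fin nA, if c = (i : ℕ) then A i else 0) =
      if h : c < nA then A ⟨c, h⟩ else 0 := by
  by_cases h : c < nA
  · rw [dif_pos h, Finset.sum_eq_single ⟨c, h⟩]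
    · simp
    · intro b _ hb
      rw [if_neg]
      intro he
      exact hb (Fin.ext he.symm)
    · simp
  · rw [dif_neg h, Finset.sum_eq_zero]
    intro i _
    rw [if_neg]
    intro he
    exact h (lt_of_eq_of_lt he i.isLt)

private lemma two_ones_contra_aux {n : ℕ} (v : Fin n → ℝ) (h01 : ∀ i, v i = 0 ∨ v i = 1)
    (hle : ∑ i, v i ≤ 1) {i i' : Fin n} (hne : i ≠ i') (h1 : v i = 1) (h2 : v i' = 1) :
    False := by
  have hpair : ∑ x ∈ ({i, i'} : Finset (Fin n)), v x = 2 := by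
    rw [Finset.sum_pair hne, h1, h2]; norm_num
  have hmono := Finset.sum_le_sum_of_subset_of_nonneg (f := v)
    (Finset.subset_univ ({i, i'} : Finset (Fin n)))
    (fun x _ _ => by rcases h01 x with h | h <;> rw [h] <;> norm_num)
  rw [hpair] at hmono
  linarith

/-- Suppose `M > k·max_{i,j} Δ(i,j)` (stated as `M > k·Δ(i,j)` for all
`i, j`, equivalent since `1 ≤ k ≤ min(nA, nB)` makes the index set nonempty).  A total-
score maximizer over injective assignments `f : Fin nB → Fin (nA + nB − k)` exists, and
for any such maximizer `f`, the matrix `Ĉ` with `ĉ_{i,j} = 1` iff `f j = i` with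
`i < nA` is a bipartite linkage structure with exactly `k` links maximizing
`∑_{i,j} ĉ_{i,j}·Δ(i,j)` over all bipartite linkage structures with exactly `k` links,
and the maximal total score equals `(nB − k)·M + ∑_{i,j} ĉ_{i,j}·Δ(i,j)`: the augmented
LSAP solves the `k`-constrained inner maximization. -/
theorem augmented_lsap_solves_k_constrained_inner_maximization
    {nA nB k : ℕ} (hk1 : 1 ≤ k) (hkA : k ≤ nA) (hkB : k ≤ nB)
    (Δ : Fin nA → Fin nB → ℝ) (hΔ : ∀ i j, 0 ≤ Δ i j)
    (M : ℝ) (hM : ∀ i j, (k : ℝ) * Δ i j < M) :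
    (∃ f : Fin nB → Fin (nA + nB - k), Function.Injective f ∧
      ∀ g : Fin nB → Fin (nA + nB - k), Function.Injective g →
        ∑ j, augScore Δ M (g j) j ≤ ∑ j, augScore Δ M (f j) j) ∧
    (∀ f : Fin nB → Fin (nA + nB - k), Function.Injective f →
      (∀ g : Fin nB → Fin (nA + nB - k), Function.Injective g →
        ∑ j, augScore Δ M (g j) j ≤ ∑ j, augScore Δ M (f j) j) →
      IsBipartiteLinkage
        (fun (i : Fin nA) (j : Fin nB) =>
          if ((f j : ℕ) = (i : ℕ)) then (1 : ℝ) else 0) ∧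
      (∑ i : Fin nA, ∑ j : Fin nB, (if ((f j : ℕ) = (i : ℕ)) then (1 : ℝ) else 0)) = (k : ℝ) ∧
      (∀ C' : Fin nA → Fin nB → ℝ, IsBipartiteLinkage C' →
        (∑ i, ∑ j, C' i j) = (k : ℝ) →
        ∑ i, ∑ j, C' i j * Δ i j ≤
          ∑ i : Fin nA, ∑ j : Fin nB, (if ((f j : ℕ) = (i : ℕ)) then (1 : ℝ) else 0) * Δ i j) ∧
      (∑ j, augScore Δ M (f j) j) =
        ((nB : ℝ) - (k : ℝ)) * M +
          ∑ i : Fin nA, ∑ j : Fin nB, (if ((f j : ℕ) = (i : ℕ)) then (1 : ℝ) else 0) * Δ i j) := by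
  classical
  have hnA : nA ≤ nA + nB - k := by omega
  have hnB : nB ≤ nA + nB - k := by omega
  set n := nA + nB - k with hn
  have hTcard : (Finset.univ.filter (fun i : Fin n => nA ≤ (i : ℕ))).card = nB - k := by
    rw [card_filter_ge_aux hnA]; omega
  have hMΔ : ∀ i j, Δ i j < M := by
    intro i j
    have h1 : (1 : ℝ) ≤ (k : ℝ) := by exact_mod_cast hk1
    nlinarith [hM i j, hΔ i j]
  constructor
  · have : Nonempty (Fin nB ↪ Fin n) := ⟨Fin.castLEEmb hnB⟩
    obtain ⟨e, he⟩ := Finite.exists_max (fun e : Fin nB ↪ Fin n => ∑ j, augScore Δ M (e j) j)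
    exact ⟨e, e.injective, fun g hg => he ⟨g, hg⟩⟩
  · intro f hf hmax
    set Jf := Finset.univ.filter (fun j => (f j : ℕ) < nA) with hJf
    set Df := Finset.univ.filter (fun j => ¬ ((f j : ℕ) < nA)) with hDf
    have hJD : Jf.card + Df.card = nB := by
      rw [hJf, hDf, Finset.card_filter_add_card_filter_not]
      simp
    have hDle : Df.card ≤ nB - k := by
      rw [← hTcard]
      apply Finset.card_le_card_of_injOn f
      · intro j hj
        simp only [hDf, Finset.mem_coe, Finset.mem_filter, Finset.mem_univ, true_and] at hj ⊢
        omega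
      · exact fun a _ b _ h => hf h
    have hDeq : Df.card = nB - k := by
      by_contra hne
      have hlt : Df.card < nB - k := lt_of_le_of_ne hDle hne
      have hsub : Df.image f ⊆ Finset.univ.filter (fun i : Fin n => nA ≤ (i : ℕ)) := by
        intro x hx
        simp only [Finset.mem_image] at hx
        obtain ⟨j, hj, rfl⟩ := hx
        simp only [hDf, Finset.mem_filter, Finset.mem_univ, true_and] at hj
        simp only [Finset.mem_filter, Finset.mem_univ, true_and]
        omega
      have hsslt : Df.image f ⊂ Finset.univ.filter (fun i : Fin n => nA ≤ (i : ℕ)) := by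
        apply hsub.ssubset_of_ne
        intro h
        have := Finset.card_image_le (f := f) (s := Df)
        rw [h, hTcard] at this
        omega
      obtain ⟨d, hdT, hdimg⟩ := Finset.exists_of_ssubset hsslt
      have hdge : nA ≤ (d : ℕ) := by
        simp only [Finset.mem_filter, Finset.mem_univ, true_and] at hdT
        exact hdT
      have hdran : ∀ j, f j ≠ d := by
        intro j hj
        have hjD : j ∈ Df := by
          simp only [hDf, Finset.mem_filter, Finset.mem_univ, true_and]
          rw [hj]; omega
        exact hdimg (hj ▸ Finset.mem_image_of_mem f hjD)
      have hJfpos : 0 < Jf.card := by omega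
      obtain ⟨j₀, hj₀⟩ := Finset.card_pos.mp hJfpos
      have hj₀lt : (f j₀ : ℕ) < nA := by
        simpa only [hJf, Finset.mem_filter, Finset.mem_univ, true_and] using hj₀
      have hginj : Function.Injective (Function.update f j₀ d) := by
        intro a b hab
        by_cases ha : a = j₀ <;> by_cases hb : b = j₀
        · rw [ha, hb]
        · subst ha
          rw [Function.update_self, Function.update_of_ne hb] at hab
          exact absurd hab.symm (hdran b)
        · subst hb
          rw [Function.update_of_ne ha, Function.update_self] at hab
          exact absurd hab (hdran a)
        · rw [Function.update_of_ne ha, Function.update_of_ne hb] at hab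
          exact hf hab
      have hscore := hmax _ hginj
      rw [← Finset.add_sum_erase Finset.univ (fun j => augScore Δ M (f j) j)
        (Finset.mem_univ j₀),
        ← Finset.add_sum_erase Finset.univ
          (fun j => augScore Δ M (Function.update f j₀ d j) j) (Finset.mem_univ j₀)] at hscore
      have heq : ∑ j ∈ Finset.univ.erase j₀, augScore Δ M (Function.update f j₀ d j) j
          = ∑ j ∈ Finset.univ.erase j₀, augScore Δ M (f j) j := by
        apply Finset.sum_congr rfl
        intro j hj
        rw [Function.update_of_ne (Finset.ne_of_mem_erase hj)]
      rw [heq, Function.update_self] at hscore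
      have h1 : augScore Δ M d j₀ = M := by
        simp only [augScore, dif_neg (by omega : ¬ (d : ℕ) < nA)]
      have h2 : augScore Δ M (f j₀) j₀ = Δ ⟨(f j₀ : ℕ), hj₀lt⟩ j₀ := by
        simp only [augScore, dif_pos hj₀lt]
      rw [h1, h2] at hscore
      have := hMΔ ⟨(f j₀ : ℕ), hj₀lt⟩ j₀
      linarith
    have hJcard : Jf.card = k := by omega
    -- sum of the Chat matrix against an arbitrary payoff A
    have hChatΔ : (∑ i : Fin nA, ∑ j : Fin nB,
        (if ((f j : ℕ) = (i : ℕ)) then (1 : ℝ) else 0) * Δ i j)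
        = ∑ j ∈ Jf, augScore Δ M (f j) j := by
      rw [Finset.sum_comm]
      have hterm : ∀ j : Fin nB, (∑ i : Fin nA,
          (if ((f j : ℕ) = (i : ℕ)) then (1 : ℝ) else 0) * Δ i j)
          = if h : (f j : ℕ) < nA then Δ ⟨(f j : ℕ), h⟩ j else 0 := by
        intro j
        rw [← inner_sum_aux (f j : ℕ) (fun i => Δ i j)]
        apply Finset.sum_congr rfl
        intro i _
        by_cases h : (f j : ℕ) = (i : ℕ) <;> simp [h]
      rw [Finset.sum_congr rfl (fun j _ => hterm j)]
      rw [← Finset.sum_filter_add_sum_filter_not Finset.univ (fun j => (f j : ℕ) < nA)]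
      have h2 : ∑ j ∈ Finset.univ.filter (fun j => ¬ (f j : ℕ) < nA),
          (if h : (f j : ℕ) < nA then Δ ⟨(f j : ℕ), h⟩ j else 0) = 0 := by
        apply Finset.sum_eq_zero
        intro j hj
        simp only [Finset.mem_filter, Finset.mem_univ, true_and] at hj
        rw [dif_neg hj]
      rw [h2, add_zero]
      apply Finset.sum_congr rfl
      intro j hj
      simp only [hJf, Finset.mem_filter, Finset.mem_univ, true_and] at hj
      simp only [augScore, dif_pos hj]
    have hscoref : (∑ j, augScore Δ M (f j) j)
        = ((nB : ℝ) - (k : ℝ)) * M + ∑ j ∈ Jf, augScore Δ M (f j) j := by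
      rw [← Finset.sum_filter_add_sum_filter_not Finset.univ (fun j => (f j : ℕ) < nA)
        (fun j => augScore Δ M (f j) j)]
      have hDall : ∀ j ∈ Df, augScore Δ M (f j) j = M := by
        intro j hj
        simp only [hDf, Finset.mem_filter, Finset.mem_univ, true_and] at hj
        simp only [augScore, dif_neg hj]
      rw [Finset.sum_congr rfl hDall, Finset.sum_const, hDeq, nsmul_eq_mul,
        Nat.cast_sub hkB]
      ring
    refine ⟨⟨fun i j => by by_cases h : (f j : ℕ) = (i : ℕ) <;> simp [h], ?_, ?_⟩, ?_, ?_, ?_⟩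
    · intro i
      rw [Finset.sum_boole]
      have hc : (Finset.univ.filter (fun j => (f j : ℕ) = (i : ℕ))).card ≤ 1 := by
        apply Finset.card_le_one.mpr
        intro a ha b hb
        simp only [Finset.mem_filter, Finset.mem_univ, true_and] at ha hb
        exact hf (Fin.ext (ha.trans hb.symm))
      exact_mod_cast hc
    · intro j
      rw [inner_sum_aux (f j : ℕ) (fun _ => (1 : ℝ))]
      by_cases h : (f j : ℕ) < nA <;> simp [h]
    · rw [Finset.sum_comm]
      have hterm : ∀ j : Fin nB,
          (∑ i : Fin nA, if ((f j : ℕ) = (i : ℕ)) then (1 : ℝ) else 0)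
          = if (f j : ℕ) < nA then (1 : ℝ) else 0 := by
        intro j
        rw [inner_sum_aux (f j : ℕ) (fun _ => (1 : ℝ))]
        by_cases h : (f j : ℕ) < nA <;> simp [h]
      rw [Finset.sum_congr rfl (fun j _ => hterm j), Finset.sum_boole, ← hJf, hJcard]
    · -- optimality over linkages with exactly k links
      intro C' hC' hsumk
      obtain ⟨h01, hrow, hcol⟩ := hC'
      set J : Finset (Fin nB) := Finset.univ.filter (fun j => ∃ i, C' i j = 1) with hJ
      have hJmem : ∀ j, j ∈ J ↔ ∃ i, C' i j = 1 := by
        intro j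
        simp only [hJ, Finset.mem_filter, Finset.mem_univ, true_and]
      have hmex : ∀ j : Fin nB, ∃ i : Fin nA, j ∈ J → C' i j = 1 := by
        intro j
        by_cases hj : j ∈ J
        · obtain ⟨i, hi⟩ := (hJmem j).mp hj
          exact ⟨i, fun _ => hi⟩
        · exact ⟨⟨0, by omega⟩, fun h => absurd h hj⟩
      choose m hm using hmex
      have huniq : ∀ j ∈ J, ∀ i, C' i j = 1 → i = m j := by
        intro j hj i hi
        by_contra hne
        exact two_ones_contra_aux (fun i => C' i j) (fun i => h01 i j) (hcol j) hne hi (hm j hj)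
      have hminj : ∀ a ∈ J, ∀ b ∈ J, m a = m b → a = b := by
        intro a ha b hb hab
        by_contra hne
        exact two_ones_contra_aux (fun j => C' (m a) j) (fun j => h01 (m a) j) (hrow (m a))
          hne (hm a ha) (by rw [hab]; exact hm b hb)
      have hcnt01 : ∀ j : Fin nB, (∑ i, C' i j) = if j ∈ J then (1 : ℝ) else 0 := by
        intro j
        by_cases hj : j ∈ J
        · rw [if_pos hj, Finset.sum_eq_single (m j)]
          · exact hm j hj
          · intro i _ hne
            rcases h01 i j with h | h
            · exact h
            · exact absurd (huniq j hj i h) hne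
          · simp
        · rw [if_neg hj]
          apply Finset.sum_eq_zero
          intro i _
          rcases h01 i j with h | h
          · exact h
          · exact absurd ((hJmem j).mpr ⟨i, h⟩) hj
      have hJcardR : (J.card : ℝ) = (k : ℝ) := by
        rw [← hsumk, Finset.sum_comm, Finset.sum_congr rfl (fun j _ => hcnt01 j),
          Finset.sum_boole, Finset.filter_univ_mem]
      have hJcardN : J.card = k := by exact_mod_cast hJcardR
      have hecard : (Finset.univ \ J).card
          = (Finset.univ.filter (fun i : Fin n => nA ≤ (i : ℕ))).card := by
        rw [Finset.card_sdiff_of_subset (Finset.subset_univ J), Finset.card_univ, Fintype.card_fin,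
          hJcardN, hTcard]
      let e := Finset.equivOfCardEq hecard
      have hmlt : ∀ j : Fin nB, (m j : ℕ) < n := fun j => lt_of_lt_of_le (m j).isLt hnA
      set g : Fin nB → Fin n := fun j => if hj : j ∈ J then ⟨(m j : ℕ), hmlt j⟩
        else (e ⟨j, Finset.mem_sdiff.mpr ⟨Finset.mem_univ j, hj⟩⟩ : Fin n) with hg
      have hgJ : ∀ j ∈ J, (g j : ℕ) = (m j : ℕ) := by
        intro j hj
        simp only [hg, dif_pos hj]
      have hgJc : ∀ j, j ∉ J → nA ≤ (g j : ℕ) := by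
        intro j hj
        have hmem := (e ⟨j, Finset.mem_sdiff.mpr ⟨Finset.mem_univ j, hj⟩⟩).2
        simp only [Finset.mem_filter, Finset.mem_univ, true_and] at hmem
        simp only [hg, dif_neg hj]
        exact hmem
      have hginj : Function.Injective g := by
        intro a b hab
        have hv : (g a : ℕ) = (g b : ℕ) := congrArg Fin.val hab
        by_cases ha : a ∈ J <;> by_cases hb : b ∈ J
        · apply hminj a ha b hb
          apply Fin.ext
          rw [← hgJ a ha, ← hgJ b hb, hv]
        · exfalso
          have h1 : (g a : ℕ) < nA := by rw [hgJ a ha]; exact (m a).isLt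
          have h2 := hgJc b hb
          omega
        · exfalso
          have h1 : (g b : ℕ) < nA := by rw [hgJ b hb]; exact (m b).isLt
          have h2 := hgJc a ha
          omega
        · simp only [hg, dif_neg ha, dif_neg hb] at hab
          have := e.injective (Subtype.ext hab)
          exact congrArg Subtype.val this
      have hC'Δ : (∑ i, ∑ j, C' i j * Δ i j) = ∑ j ∈ J, Δ (m j) j := by
        rw [Finset.sum_comm,
          ← Finset.sum_filter_add_sum_filter_not Finset.univ (fun j => j ∈ J)
            (fun j => ∑ i, C' i j * Δ i j),
          Finset.filter_univ_mem]
        have h2 : ∑ j ∈ Finset.univ.filter (fun j => ¬ j ∈ J), (∑ i, C' i j * Δ i j) = 0 := by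
          apply Finset.sum_eq_zero
          intro j hj
          simp only [Finset.mem_filter, Finset.mem_univ, true_and] at hj
          apply Finset.sum_eq_zero
          intro i _
          rcases h01 i j with h | h
          · rw [h, zero_mul]
          · exact absurd ((hJmem j).mpr ⟨i, h⟩) hj
        have h1 : ∀ j ∈ J, (∑ i, C' i j * Δ i j) = Δ (m j) j := by
          intro j hj
          rw [Finset.sum_eq_single (m j)]
          · rw [hm j hj, one_mul]
          · intro i _ hne
            rcases h01 i j with h | h
            · rw [h, zero_mul]
            · exact absurd (huniq j hj i h) hne
          · simp
        rw [Finset.sum_congr rfl h1, h2, add_zero]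
      have hscoreg : (∑ j, augScore Δ M (g j) j)
          = ((nB : ℝ) - (k : ℝ)) * M + ∑ j ∈ J, Δ (m j) j := by
        rw [← Finset.sum_filter_add_sum_filter_not Finset.univ (fun j => j ∈ J)
          (fun j => augScore Δ M (g j) j), Finset.filter_univ_mem]
        have h1 : ∀ j ∈ J, augScore Δ M (g j) j = Δ (m j) j := by
          intro j hj
          have hlt : (g j : ℕ) < nA := by rw [hgJ j hj]; exact (m j).isLt
          simp only [augScore, dif_pos hlt]
          have : (⟨(g j : ℕ), hlt⟩ : Fin nA) = m j := Fin.ext (hgJ j hj)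
          rw [this]
        have h2 : ∀ j ∈ Finset.univ.filter (fun j => ¬ j ∈ J), augScore Δ M (g j) j = M := by
          intro j hj
          simp only [Finset.mem_filter, Finset.mem_univ, true_and] at hj
          have := hgJc j hj
          simp only [augScore, dif_neg (by omega : ¬ (g j : ℕ) < nA)]
        rw [Finset.sum_congr rfl h1, Finset.sum_congr rfl h2, Finset.sum_const]
        have hcard2 : (Finset.univ.filter (fun j => ¬ j ∈ J)).card = nB - k := by
          have : Finset.univ.filter (fun j => ¬ j ∈ J) = Finset.univ \ J := by
            ext x; simp
          rw [this, Finset.card_sdiff_of_subset (Finset.subset_univ J), Finset.card_univ,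
            Fintype.card_fin, hJcardN]
        rw [hcard2, nsmul_eq_mul, Nat.cast_sub hkB]
        ring
      have hle := hmax g hginj
      rw [hscoreg, hscoref] at hle
      rw [hC'Δ, hChatΔ]
      linarith
    · rw [hChatΔ]
      exact hscoref
end
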